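/- Let r ≥ 1 and let (V_j)_{j : Fin r} be finite-dimensional vector spaces over ℂ. For each j, let κ_j be a finite index type with data λ_j : κ_j → ℂ, endomorphisms P_{j,k}, N_{j,k} of V_j, and integers m_{j,k} ≥ 1 satisfying, for each fixed j: P_{j,k}² = P_{j,k}; P_{j,k} ∘ P_{j,l} = 0 for k ≠ l; ∑_k P_{j,k} = id; P_{j,k} ∘ N_{j,k} = N_{j,k} ∘ P_{j,k} = N_{j,k}; P_{j,k} ∘ N_{j,l} = N_{j,l} ∘ P_{j,k} = 0 for k ≠ l; and N_{j,k}^{m_{j,k}} = 0. Set X_j = ∑_k (λ_{j,k} • P_{j,k} + N_{j,k}), and let lift_j(X_j) be the endomorphism of W = ⨂_{j : Fin r} V_j applying X_j in the j-th tensor coordinate and the identity elsewhere. Then for every multivariate polynomial F ∈ ℂ[z_1, …, z_r], evaluating F at the commuting tuple (lift_1(X_1), …, lift_r(X_r)) in End(W) gives: F(lift X) = ∑_{k ∈ ∏_j κ_j} ∑_{q, 0 ≤ q_j ≤ m_{j,k_j}−1} ( (∏_j ∂_j^{q_j} F)(λ_{1,k_1}, …, λ_{r,k_r}) / ∏_j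 q_j! ) • ⨂_{j} ( N_{j,k_j}^{q_j} ∘ P_{j,k_j} ), where ∂_j denotes the formal partial derivative in the j-th variable, N^0 ∘ P = P, and ⨂_j f_j denotes the induced endomorphism PiTensorProduct.map of W. -/

import Mathlib

open scoped TensorProduct

/-- Evaluation of a multivariate polynomial at a (commuting) tuple of elements of a
possibly noncommutative algebra: `F ↦ ∑_{d ∈ supp F} (coeff d F) • T₁^{d₁} ⋯ T_r^{d_r}`. -/
noncomputable def mvEvalAt {r : ℕ} {A : Type*} [Ring A] [Algebra ℂ A]
    (T : Fin r → A) (F : MvPolynomial (Fin r) ℂ) : A :=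
  ∑ d ∈ F.support, MvPolynomial.coeff d F • (List.ofFn (fun j => T j ^ d j)).prod

open MvPolynomial in
lemma ucf_iter_pderiv_monomial {r : ℕ} (j : Fin r) (n : ℕ) (e : Fin r →₀ ℕ) (c : ℂ) :
    (fun p => MvPolynomial.pderiv j p)^[n] (monomial e c) =
      monomial (e - Finsupp.single j n) (((e j).descFactorial n : ℂ) * c) := by
  induction n with
  | zero => simp
  | succ n ih =>
      rw [Function.iterate_succ_apply', ih, pderiv_monomial]
      have h1 : e - Finsupp.single j n - Finsupp.single j 1 = e - Finsupp.single j (n + 1) := by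
        rw [tsub_tsub, ← Finsupp.single_add]
      have h2 : (e - Finsupp.single j n) j = e j - n := by
        rw [Finsupp.tsub_apply, Finsupp.single_eq_same]
      rw [h1, h2, Nat.descFactorial_succ]
      congr 1
      push_cast
      ring

lemma ucf_list_sum_single_apply {r : ℕ} (q : Fin r → ℕ) (j : Fin r) :
    ∀ (t : List (Fin r)), j ∉ t →
      ((t.map fun i => Finsupp.single i (q i)).sum) j = 0 := by
  intro t
  induction t with
  | nil => simp
  | cons a t ih =>
      intro hj
      simp only [List.map_cons, List.sum_cons, Finsupp.add_apply]
      rw [ih (fun h => hj (List.mem_cons_of_mem a h)),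
        Finsupp.single_apply_eq_zero.2
          (fun h => by subst h; exact absurd List.mem_cons_self hj)]

open MvPolynomial in
lemma ucf_list_pderiv_monomial {r : ℕ} (q : Fin r → ℕ) :
    ∀ (l : List (Fin r)), l.Nodup → ∀ (e : Fin r →₀ ℕ) (c : ℂ),
      l.foldr (fun j G => (fun p => MvPolynomial.pderiv j p)^[q j] G) (monomial e c)
        = monomial (e - (l.map fun j => Finsupp.single j (q j)).sum)
            ((l.map fun j => ((e j).descFactorial (q j) : ℂ)).prod * c) := by
  intro l
  induction l with
  | nil => intro _ e c; simp
  | cons j t ih =>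
      intro hn e c
      have hjt : j ∉ t := (List.nodup_cons.1 hn).1
      rw [List.foldr_cons, ih (List.nodup_cons.1 hn).2,
        ucf_iter_pderiv_monomial]
      have h2 : (e - (t.map fun i => Finsupp.single i (q i)).sum) j = e j := by
        rw [Finsupp.tsub_apply, ucf_list_sum_single_apply q j t hjt, Nat.sub_zero]
      rw [h2, tsub_tsub]
      simp only [List.map_cons, List.sum_cons, List.prod_cons]
      rw [add_comm]
      ring_nf

lemma ucf_foldr_eq_prod_apply {r : ℕ} (q : Fin r → ℕ) (F : MvPolynomial (Fin r) ℂ) :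
    Fin.foldr r (fun j G => (fun p => MvPolynomial.pderiv j p)^[q j] G) F
      = (((List.finRange r).map
            (fun j => ((MvPolynomial.pderiv j).toLinearMap ^ (q j)
              : Module.End ℂ (MvPolynomial (Fin r) ℂ)))).prod) F := by
  rw [Fin.foldr_eq_foldr_finRange]
  induction (List.finRange r) with
  | nil => simp
  | cons j t ih =>
      rw [List.foldr_cons, ih, List.map_cons, List.prod_cons, Module.End.mul_apply,
        Module.End.pow_apply]
      congr 1

open MvPolynomial in
lemma ucf_eval_fold_monomial {r : ℕ} (q : Fin r → ℕ) (lamv : Fin r → ℂ)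
    (e : Fin r →₀ ℕ) (c : ℂ) :
    MvPolynomial.eval lamv
        (Fin.foldr r (fun j G => (fun p => MvPolynomial.pderiv j p)^[q j] G)
          (MvPolynomial.monomial e c))
      = c * ∏ j, (((e j).descFactorial (q j) : ℂ) * lamv j ^ (e j - q j)) := by
  rw [Fin.foldr_eq_foldr_finRange,
    ucf_list_pderiv_monomial q _ (List.nodup_finRange r)]
  have hS : ∀ i, (((List.finRange r).map fun j => Finsupp.single j (q j)).sum) i = q i := by
    intro i
    have : (((List.finRange r).map fun j => Finsupp.single j (q j)).sum) i
        = ((List.finRange r).map fun j => (Finsupp.single j (q j) : Fin r →₀ ℕ) i).sum := by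
      induction (List.finRange r) with
      | nil => simp
      | cons a t ih => simp [Finsupp.add_apply, ih]
    rw [this, ← Fin.sum_univ_def]
    simp [Finsupp.single_apply]
  rw [MvPolynomial.eval_monomial]
  rw [Finsupp.prod_fintype _ _ (fun i => pow_zero _)]
  have hP : ((List.finRange r).map fun j => ((e j).descFactorial (q j) : ℂ)).prod
      = ∏ j, ((e j).descFactorial (q j) : ℂ) := (Fin.prod_univ_def _).symm
  rw [hP, Finset.prod_mul_distrib]
  have he : ∀ j, (e - ((List.finRange r).map fun j => Finsupp.single j (q j)).sum) j
      = e j - q j := by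
    intro j; rw [Finsupp.tsub_apply, hS]
  simp only [he]
  ring

lemma ucf_pow_spectral {A : Type*} [Ring A] [Algebra ℂ A] {κ : Type*} [Fintype κ]
    (lam : κ → ℂ) (P N : κ → A) (m : κ → ℕ) (hm : ∀ k, 1 ≤ m k)
    (hP2 : ∀ k, P k * P k = P k) (hPortho : ∀ k l, k ≠ l → P k * P l = 0)
    (hPsum : ∑ k, P k = 1) (hPN : ∀ k, P k * N k = N k) (hNP : ∀ k, N k * P k = N k)
    (hPNc : ∀ k l, k ≠ l → P k * N l = 0) (hNPc : ∀ k l, k ≠ l → N l * P k = 0)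
    (hNnil : ∀ k, N k ^ m k = 0) (X : A) (hX : X = ∑ k, (lam k • P k + N k)) (d : ℕ) :
    X ^ d = ∑ k, ∑ q ∈ Finset.range (m k),
      ((d.choose q : ℂ) * lam k ^ (d - q)) • (N k ^ q * P k) := by
  have key : ∀ k q, X * (N k ^ q * P k)
      = lam k • (N k ^ q * P k) + N k ^ (q + 1) * P k := by
    intro k q
    rw [hX, Finset.sum_mul]
    rw [Finset.sum_eq_single k ?h0 (by simp)]
    · cases q with
      | zero =>
          simp only [pow_zero, one_mul, zero_add, pow_one]
          rw [add_mul, smul_mul_assoc, hP2, hNP]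
      | succ n =>
          rw [add_mul, smul_mul_assoc]
          congr 1
          · congr 1
            rw [pow_succ' (N k) n, mul_assoc (N k), ← mul_assoc (P k) (N k), hPN,
              ← mul_assoc]
          · rw [pow_succ' (N k) (n + 1), mul_assoc]
    · intro l _ hlk
      have hNlNk : N l * N k = 0 := by
        rw [← hPN k, ← mul_assoc, hNPc k l (Ne.symm hlk), zero_mul]
      cases q with
      | zero =>
          rw [pow_zero, one_mul, add_mul, smul_mul_assoc, hPortho l k hlk,
            hNPc k l (Ne.symm hlk), smul_zero, add_zero]
      | succ n =>
          have hP0 : P l * (N k ^ (n + 1) * P k) = 0 := by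
            rw [pow_succ' (N k) n, ← mul_assoc, ← mul_assoc, hPNc l k hlk, zero_mul, zero_mul]
          have hN0 : N l * (N k ^ (n + 1) * P k) = 0 := by
            rw [pow_succ' (N k) n, ← mul_assoc, ← mul_assoc, hNlNk, zero_mul, zero_mul]
          rw [add_mul, smul_mul_assoc, hP0, hN0, smul_zero, add_zero]
  induction d with
  | zero =>
      rw [pow_zero, ← hPsum]
      refine (Finset.sum_congr rfl fun k _ => ?_).symm
      rw [Finset.sum_eq_single 0 ?hz (fun h => absurd (Finset.mem_range.2 (hm k)) h)]
      · simp
      · intro q _ hq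
        rcases Nat.exists_eq_succ_of_ne_zero hq with ⟨n, rfl⟩
        rw [Nat.choose_eq_zero_of_lt (Nat.succ_pos n)]
        simp
  | succ d ih =>
      rw [pow_succ' X d, ih, Finset.mul_sum]
      refine Finset.sum_congr rfl fun k _ => ?_
      rw [Finset.mul_sum]
      have step : ∀ q, X * (((d.choose q : ℂ) * lam k ^ (d - q)) • (N k ^ q * P k))
          = ((d.choose q : ℂ) * lam k ^ (d - q)) •
              (lam k • (N k ^ q * P k) + N k ^ (q + 1) * P k) := by
        intro q; rw [mul_smul_comm, key]
      simp only [step, smul_add]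
      rw [Finset.sum_add_distrib]
      set e : ℕ → A := fun q => N k ^ q * P k with he
      set a : ℕ → ℂ := fun q => (d.choose q : ℂ) * lam k ^ (d - q) with ha
      set b : ℕ → ℂ := fun q => Nat.rec (0 : ℂ) (fun n _ => a n) q with hb
      have hshift : ∑ q ∈ Finset.range (m k), a q • e (q + 1)
          = ∑ q ∈ Finset.range (m k), b q • e q := by
        have h1 : ∑ q ∈ Finset.range (m k + 1), b q • e q
            = (∑ q ∈ Finset.range (m k), b (q + 1) • e (q + 1)) + b 0 • e 0 :=
          Finset.sum_range_succ' (fun q => b q • e q) (m k)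
        have h2 : ∑ q ∈ Finset.range (m k + 1), b q • e q
            = (∑ q ∈ Finset.range (m k), b q • e q) + b (m k) • e (m k) :=
          Finset.sum_range_succ (fun q => b q • e q) (m k)
        have he0 : e (m k) = 0 := by simp only [he]; rw [hNnil k, zero_mul]
        have hb0 : b 0 = 0 := rfl
        have hba : ∀ q, b (q + 1) = a q := fun _ => rfl
        have h3 := h1.symm.trans h2
        rw [hb0, zero_smul, add_zero, he0, smul_zero, add_zero] at h3
        calc ∑ q ∈ Finset.range (m k), a q • e (q + 1)
            = ∑ q ∈ Finset.range (m k), b (q + 1) • e (q + 1) := by simp only [hba]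
          _ = ∑ q ∈ Finset.range (m k), b q • e q := h3
      rw [hshift, ← Finset.sum_add_distrib]
      refine Finset.sum_congr rfl fun q _ => ?_
      rw [smul_smul, ← add_smul]
      congr 1
      cases q with
      | zero =>
          have hb0 : b 0 = 0 := rfl
          rw [hb0, add_zero]
          simp [pow_succ]
      | succ s =>
          have hbs : b (s + 1) = a s := rfl
          rw [hbs]
          simp only [ha]
          rw [Nat.succ_sub_succ]
          by_cases h : s + 1 ≤ d
          · have hds : d - s = (d - (s + 1)) + 1 := by omega
            rw [Nat.choose_succ_succ d s, hds, pow_succ]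
            push_cast
            ring
          · have h1 : d.choose (s + 1) = 0 := Nat.choose_eq_zero_of_lt (by omega)
            have h2 : (d + 1).choose (s + 1) = d.choose s := by
              rw [Nat.choose_succ_succ d s, h1, add_zero]
            have h3 : d - s = 0 := by omega
            rw [h1, h2, h3]
            simp

section TensorLemmas

variable {r : ℕ} {V : Fin r → Type*} [∀ j, AddCommGroup (V j)] [∀ j, Module ℂ (V j)]

lemma ucf_lift_pow (j : Fin r) (Y : V j →ₗ[ℂ] V j) (n : ℕ) :
    (PiTensorProduct.map
        (Function.update (fun i => (LinearMap.id : V i →ₗ[ℂ] V i)) j Y)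
      : Module.End ℂ (⨂[ℂ] i, V i)) ^ n
    = PiTensorProduct.map
        (Function.update (fun i => (LinearMap.id : V i →ₗ[ℂ] V i)) j (Y ^ n)) := by
  rw [← PiTensorProduct.map_pow]
  congr 1
  funext i
  by_cases h : i = j
  · subst h; simp [Pi.pow_apply]
  · simp [Pi.pow_apply, Function.update_of_ne h]

lemma ucf_prod_lift (Y : (j : Fin r) → V j →ₗ[ℂ] V j) :
    (List.ofFn (fun j => (PiTensorProduct.map
        (Function.update (fun i => (LinearMap.id : V i →ₗ[ℂ] V i)) j (Y j))
      : Module.End ℂ (⨂[ℂ] i, V i)))).prod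
    = PiTensorProduct.map Y := by
  have main : ∀ (l : List (Fin r)), l.Nodup →
      (l.map (fun j => (PiTensorProduct.map
          (Function.update (fun i => (LinearMap.id : V i →ₗ[ℂ] V i)) j (Y j))
        : Module.End ℂ (⨂[ℂ] i, V i)))).prod
      = PiTensorProduct.map (fun i => if i ∈ l then Y i else LinearMap.id) := by
    intro l
    induction l with
    | nil => intro _; simp [PiTensorProduct.map_id]; rfl
    | cons j t ih =>
        intro hn
        have hjt : j ∉ t := (List.nodup_cons.1 hn).1
        rw [List.map_cons, List.prod_cons, ih (List.nodup_cons.1 hn).2,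
          ← PiTensorProduct.map_mul]
        congr 1
        funext i
        by_cases h : i = j
        · subst h
          simp only [Function.update_self, List.mem_cons, true_or, if_pos, hjt, if_neg]
          show Y i * LinearMap.id = Y i
          exact mul_one (Y i)
        · simp only [Function.update_of_ne h, List.mem_cons, h, false_or]
          by_cases ht : i ∈ t
          · simp only [if_pos ht]
            exact one_mul (Y i)
          · simp only [if_neg ht]
            exact one_mul _
  rw [List.ofFn_eq_map, main _ (List.nodup_finRange r)]
  congr 1
  funext i
  simp [List.mem_finRange]

lemma ucf_map_pow_expand
    (κ : Fin r → Type*) [∀ j, Fintype (κ j)]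
    (lam : (j : Fin r) → κ j → ℂ)
    (P N : (j : Fin r) → κ j → (V j →ₗ[ℂ] V j))
    (m : (j : Fin r) → κ j → ℕ)
    (X : (j : Fin r) → (V j →ₗ[ℂ] V j))
    (hpow : ∀ j (n : ℕ), X j ^ n = ∑ k, ∑ q ∈ Finset.range (m j k),
      ((n.choose q : ℂ) * lam j k ^ (n - q)) • (N j k ^ q * P j k))
    (d : Fin r → ℕ) :
    (PiTensorProduct.map (fun j => X j ^ d j) : Module.End ℂ (⨂[ℂ] i, V i))
      = ∑ k : (j : Fin r) → κ j,
          ∑ q ∈ Fintype.piFinset (fun j => Finset.range (m j (k j))),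
            (∏ j, (((d j).choose (q j) : ℂ) * lam j (k j) ^ (d j - q j))) •
              (PiTensorProduct.map (fun j => N j (k j) ^ (q j) * P j (k j))
                : Module.End ℂ (⨂[ℂ] i, V i)) := by
  have hM : ∀ f : (j : Fin r) → V j →ₗ[ℂ] V j,
      (PiTensorProduct.map f : Module.End ℂ (⨂[ℂ] i, V i))
        = PiTensorProduct.mapMultilinear ℂ V V f := fun f => rfl
  rw [hM]
  have h1 : (fun j => X j ^ d j)
      = fun j => ∑ k, ∑ q ∈ Finset.range (m j k),
          (((d j).choose q : ℂ) * lam j k ^ (d j - q)) • (N j k ^ q * P j k) := by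
    funext j; exact hpow j (d j)
  rw [h1, MultilinearMap.map_sum]
  refine Finset.sum_congr rfl fun k _ => ?_
  rw [MultilinearMap.map_sum_finset]
  refine Finset.sum_congr rfl fun q _ => ?_
  rw [MultilinearMap.map_smul_univ]
  rw [hM]

end TensorLemmas

/-- Unified Compact Formula, discrete-spectrum finite-dimensional multivariate case:
evaluating a multivariate polynomial at the tensor-lifted commuting tuple of operators
with discrete projector–nilpotent decompositions yields the sum, over eigenvalue
multi-indices `k` and nilpotent-order multi-indices `q`, of the mixed partial
derivatives of the polynomial times the tensor product of `N^{q_j} ∘ P`. -/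
theorem unified_compact_formula_discrete_multivariate
    (r : ℕ) (hr : 1 ≤ r)
    (V : Fin r → Type*) [∀ j, AddCommGroup (V j)] [∀ j, Module ℂ (V j)]
    [∀ j, FiniteDimensional ℂ (V j)]
    (κ : Fin r → Type*) [∀ j, Fintype (κ j)]
    (lam : (j : Fin r) → κ j → ℂ)
    (P N : (j : Fin r) → κ j → (V j →ₗ[ℂ] V j))
    (m : (j : Fin r) → κ j → ℕ) (hm : ∀ j k, 1 ≤ m j k)
    (hP2 : ∀ j k, P j k * P j k = P j k)
    (hPortho : ∀ j k l, k ≠ l → P j k * P j l = 0)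
    (hPsum : ∀ j, ∑ k, P j k = 1)
    (hPN : ∀ j k, P j k * N j k = N j k)
    (hNP : ∀ j k, N j k * P j k = N j k)
    (hPNc : ∀ j k l, k ≠ l → P j k * N j l = 0)
    (hNPc : ∀ j k l, k ≠ l → N j l * P j k = 0)
    (hNnil : ∀ j k, N j k ^ (m j k) = 0)
    (X : (j : Fin r) → (V j →ₗ[ℂ] V j))
    (hX : ∀ j, X j = ∑ k, (lam j k • P j k + N j k))
    (F : MvPolynomial (Fin r) ℂ) :
    mvEvalAt
        (fun j => (PiTensorProduct.map
            (Function.update (fun i => (LinearMap.id : V i →ₗ[ℂ] V i)) j (X j))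
          : Module.End ℂ (⨂[ℂ] i, V i))) F
      = ∑ k : (j : Fin r) → κ j,
          ∑ q ∈ Fintype.piFinset (fun j => Finset.range (m j (k j))),
            ((MvPolynomial.eval (fun j => lam j (k j))
                (Fin.foldr r
                  (fun j G => (fun p => MvPolynomial.pderiv j p)^[q j] G) F))
              / ∏ j, ((q j).factorial : ℂ)) •
            (PiTensorProduct.map (fun j => N j (k j) ^ (q j) * P j (k j))
              : Module.End ℂ (⨂[ℂ] i, V i)) := by
  classical
  have hpow : ∀ j (n : ℕ), X j ^ n = ∑ k, ∑ q ∈ Finset.range (m j k),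
      ((n.choose q : ℂ) * lam j k ^ (n - q)) • (N j k ^ q * P j k) := fun j n =>
    ucf_pow_spectral (lam j) (P j) (N j) (m j) (hm j) (hP2 j) (hPortho j) (hPsum j)
      (hPN j) (hNP j) (hPNc j) (hNPc j) (hNnil j) (X j) (hX j) n
  -- evaluate the folded derivative on a general polynomial
  have hevalfold : ∀ (q : Fin r → ℕ) (lamv : Fin r → ℂ),
      MvPolynomial.eval lamv
          (Fin.foldr r (fun j G => (fun p => MvPolynomial.pderiv j p)^[q j] G) F)
        = ∑ d ∈ F.support, MvPolynomial.coeff d F *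
            ∏ j, (((d j).descFactorial (q j) : ℂ) * lamv j ^ (d j - q j)) := by
    intro q lamv
    set L : Module.End ℂ (MvPolynomial (Fin r) ℂ) :=
      ((List.finRange r).map
        (fun j => ((MvPolynomial.pderiv j).toLinearMap ^ (q j)
          : Module.End ℂ (MvPolynomial (Fin r) ℂ)))).prod with hL
    have hLF : L F = ∑ d ∈ F.support,
        L (MvPolynomial.monomial d (MvPolynomial.coeff d F)) := by
      conv_lhs => rw [MvPolynomial.as_sum F]
      exact map_sum L _ _
    rw [ucf_foldr_eq_prod_apply, ← hL, hLF, map_sum (MvPolynomial.eval lamv)]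
    refine Finset.sum_congr rfl fun d _ => ?_
    rw [hL, ← ucf_foldr_eq_prod_apply, ucf_eval_fold_monomial]
  -- the scalar coefficient identity
  have hcoeff : ∀ (k : (j : Fin r) → κ j) (q : Fin r → ℕ),
      (MvPolynomial.eval (fun j => lam j (k j))
          (Fin.foldr r (fun j G => (fun p => MvPolynomial.pderiv j p)^[q j] G) F))
        / ∏ j, ((q j).factorial : ℂ)
      = ∑ d ∈ F.support, MvPolynomial.coeff d F *
          ∏ j, (((d j).choose (q j) : ℂ) * lam j (k j) ^ (d j - q j)) := by
    intro k q
    rw [hevalfold q (fun j => lam j (k j)), Finset.sum_div]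
    refine Finset.sum_congr rfl fun d _ => ?_
    rw [mul_div_assoc]
    congr 1
    have hQ : (∏ j, ((q j).factorial : ℂ)) ≠ 0 := by
      refine Finset.prod_ne_zero_iff.2 fun j _ => ?_
      exact_mod_cast Nat.cast_ne_zero.2 (Nat.factorial_ne_zero (q j))
    rw [div_eq_iff hQ, ← Finset.prod_mul_distrib]
    refine Finset.prod_congr rfl fun j _ => ?_
    have hd := Nat.descFactorial_eq_factorial_mul_choose (d j) (q j)
    have : ((d j).descFactorial (q j) : ℂ)
        = ((q j).factorial : ℂ) * ((d j).choose (q j) : ℂ) := by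
      rw [hd]; push_cast; ring
    rw [this]
    ring
  -- expand the left-hand side
  show (∑ d ∈ F.support, MvPolynomial.coeff d F •
      (List.ofFn (fun j => (PiTensorProduct.map
          (Function.update (fun i => (LinearMap.id : V i →ₗ[ℂ] V i)) j (X j))
        : Module.End ℂ (⨂[ℂ] i, V i)) ^ d j)).prod) = _
  have hprod : ∀ d : Fin r →₀ ℕ,
      (List.ofFn (fun j => (PiTensorProduct.map
          (Function.update (fun i => (LinearMap.id : V i →ₗ[ℂ] V i)) j (X j))
        : Module.End ℂ (⨂[ℂ] i, V i)) ^ d j)).prod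
      = ∑ k : (j : Fin r) → κ j,
          ∑ q ∈ Fintype.piFinset (fun j => Finset.range (m j (k j))),
            (∏ j, (((d j).choose (q j) : ℂ) * lam j (k j) ^ (d j - q j))) •
              (PiTensorProduct.map (fun j => N j (k j) ^ (q j) * P j (k j))
                : Module.End ℂ (⨂[ℂ] i, V i)) := by
    intro d
    simp only [ucf_lift_pow]
    rw [ucf_prod_lift (fun j => X j ^ d j),
      ucf_map_pow_expand κ lam P N m X hpow (fun j => d j)]
  simp only [hprod]
  simp only [Finset.smul_sum, smul_smul]
  rw [Finset.sum_comm]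
  refine Finset.sum_congr rfl fun k _ => ?_
  rw [Finset.sum_comm]
  refine Finset.sum_congr rfl fun q _ => ?_
  rw [hcoeff k q, Finset.sum_smul]
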